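/- arXiv:1901.07170 — 3 statements merged into one kernel-verified Lean document; each statement's English description precedes it below -/
import Mathlib

section
/- Let h : ℕ → ℕ be any function and let α, β ≤ ω^ω be ordinals such that the expression α + β is in Cantor normal form (i.e., every exponent in the Cantor normal form of α is at least every exponent in the Cantor normal form of β). Then h^α(h^β(x)) = h^{α+β}(x) for all x ∈ ℕ, where (h^α)_{α≤ω^ω} is the Hardy hierarchy relative to h. -/
noncomputable section

namespace HardyCNF

open Ordinal

/-- Find the first nonzero entry of a (little-endian) coefficient list:
returns `(k, c, rest)` when the list is `replicate k 0 ++ (c+1) :: rest`. -/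
def splitNZ : List ℕ → Option (ℕ × ℕ × List ℕ)
  | [] => none
  | 0 :: t => (splitNZ t).map (fun x => (x.1 + 1, x.2))
  | (c+1) :: t => some (0, c, t)

theorem splitNZ_eq : ∀ {ℓ : List ℕ} {k c : ℕ} {r : List ℕ},
    splitNZ ℓ = some (k, c, r) → ℓ = List.replicate k 0 ++ (c+1) :: r := by
  intro ℓ
  induction ℓ with
  | nil => intro k c r h; simp [splitNZ] at h
  | cons hd t ih =>
    intro k c r h
    match hd with
    | 0 =>
      simp only [splitNZ, Option.map_eq_some_iff] at h
      obtain ⟨⟨k', c', r'⟩, hs, he⟩ := h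
      obtain ⟨h1, h2, h3⟩ : k' + 1 = k ∧ c' = c ∧ r' = r := by
        simpa using he
      subst h1 h2 h3
      simp [List.replicate_succ, ih hs]
    | c'+1 =>
      simp only [splitNZ, Option.some.injEq] at h
      obtain ⟨h1, h2, h3⟩ : (0 : ℕ) = k ∧ c' = c ∧ t = r := by simpa using h
      subst h1 h2 h3
      simp

/-- The ordinal `ω^0·c_0 + ω^1·c_1 + ⋯` denoted by a little-endian coefficient list. -/
def toOrd : List ℕ → Ordinal.{0}
  | [] => 0
  | c :: ℓ => omega0 * toOrd ℓ + c

theorem toOrd_replicate_zero_append (k : ℕ) (ℓ : List ℕ) :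
    toOrd (List.replicate k 0 ++ ℓ) = omega0 ^ (k : Ordinal) * toOrd ℓ := by
  induction k with
  | zero => simp [toOrd]
  | succ n ih =>
    rw [List.replicate_succ, List.cons_append]
    show omega0 * toOrd (List.replicate n 0 ++ ℓ) + (0:ℕ) = _
    rw [ih]
    have hcast : ((n+1 : ℕ) : Ordinal) = 1 + (n : Ordinal) := by
      have : ((1+n : ℕ) : Ordinal) = 1 + (n : Ordinal) := by push_cast; ring_nf
      rw [← this, Nat.add_comm]
    rw [hcast, opow_add, opow_one, mul_assoc]
    simp

theorem toOrd_succ_lt (c : ℕ) (ℓ : List ℕ) : toOrd (c :: ℓ) < toOrd ((c+1) :: ℓ) := by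
  show omega0 * toOrd ℓ + (c : Ordinal) < omega0 * toOrd ℓ + ((c:ℕ)+1 : ℕ)
  apply (add_lt_add_iff_left _).mpr
  push_cast
  exact lt_add_one _

theorem toOrd_limit_lt (x k c : ℕ) (r : List ℕ) :
    toOrd (List.replicate k 0 ++ (x+1) :: c :: r) <
      toOrd (0 :: (List.replicate k 0 ++ (c+1) :: r)) := by
  have h0 : toOrd (0 :: (List.replicate k 0 ++ (c+1) :: r))
      = omega0 * (omega0 ^ (k : Ordinal) * toOrd ((c+1) :: r)) := by
    show omega0 * toOrd (List.replicate k 0 ++ (c+1) :: r) + (0:ℕ) = _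
    rw [toOrd_replicate_zero_append]; simp
  have hsw : omega0 * omega0 ^ (k : Ordinal) = omega0 ^ (k : Ordinal) * omega0 := by
    have hcast : ((k+1 : ℕ) : Ordinal) = 1 + (k : Ordinal) := by
      have : ((1+k : ℕ) : Ordinal) = 1 + (k : Ordinal) := by push_cast; ring_nf
      rw [← this, Nat.add_comm]
    have h1 : omega0 * omega0 ^ (k : Ordinal) = omega0 ^ ((k+1 : ℕ) : Ordinal) := by
      rw [hcast, opow_add, opow_one]
    have h2 : omega0 ^ (k : Ordinal) * omega0 = omega0 ^ ((k+1 : ℕ) : Ordinal) := by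
      push_cast
      rw [opow_add, opow_one]
    rw [h1, h2]
  rw [h0, toOrd_replicate_zero_append, ← mul_assoc, hsw, mul_assoc]
  apply (mul_lt_mul_iff_right₀ (opow_pos (k : Ordinal) omega0_pos)).mpr
  show omega0 * toOrd (c :: r) + ((x:ℕ)+1 : ℕ) < omega0 * toOrd ((c+1) :: r)
  have hc : toOrd ((c+1) :: r) = toOrd (c :: r) + 1 := by
    show omega0 * toOrd r + ((c:ℕ)+1:ℕ) = (omega0 * toOrd r + c) + 1
    push_cast; rw [add_assoc]
  rw [hc, mul_add, mul_one]
  apply (add_lt_add_iff_left _).mpr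
  exact nat_lt_omega0 (x+1)

/-- The Hardy hierarchy `h^α` relative to `h`, for `α < ω^ω` given in Cantor normal
form by a little-endian coefficient list:  `h^0(x) = x`, `h^{α+1}(x) = h^α(h x)`,
`h^λ(x) = h^{λ(x)}(x)` with the standard fundamental sequences. -/
def hardy (h : ℕ → ℕ) : List ℕ → ℕ → ℕ
  | [], x => x
  | (c+1) :: ℓ, x => hardy h (c :: ℓ) (h x)
  | 0 :: ℓ, x =>
    match hs : splitNZ ℓ with
    | none => x
    | some (k, c, r) => hardy h (List.replicate k 0 ++ (x+1) :: c :: r) x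
  termination_by ℓ _ => toOrd ℓ
  decreasing_by
  · exact toOrd_succ_lt c ℓ
  · rw [splitNZ_eq hs]; exact toOrd_limit_lt x k c r

/-- The Cichoń hierarchy `h_α` relative to `h`:  `h_0(x) = 0`,
`h_{α+1}(x) = 1 + h_α(h x)`, `h_λ(x) = h_{λ(x)}(x)`. -/
def cichon (h : ℕ → ℕ) : List ℕ → ℕ → ℕ
  | [], _ => 0
  | (c+1) :: ℓ, x => 1 + cichon h (c :: ℓ) (h x)
  | 0 :: ℓ, x =>
    match hs : splitNZ ℓ with
    | none => 0
    | some (k, c, r) => cichon h (List.replicate k 0 ++ (x+1) :: c :: r) x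
  termination_by ℓ _ => toOrd ℓ
  decreasing_by
  · exact toOrd_succ_lt c ℓ
  · rw [splitNZ_eq hs]; exact toOrd_limit_lt x k c r

/-- An ordinal index `≤ ω^ω`: either `α < ω^ω` given by its CNF coefficient list,
or `ω^ω` itself (represented by `none`). -/
abbrev OrdIdx := Option (List ℕ)

/-- the CNF coefficient list of `ω^k` -/
def omegaPow (k : ℕ) : List ℕ := List.replicate k 0 ++ [1]

/-- Hardy hierarchy for indices `α ≤ ω^ω`, using `ω^ω(x) = ω^{x+1}`. -/
def hardyTop (h : ℕ → ℕ) : OrdIdx → ℕ → ℕ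
  | some ℓ, x => hardy h ℓ x
  | none, x => hardy h (omegaPow (x+1)) x

/-- Cichoń hierarchy for indices `α ≤ ω^ω`. -/
def cichonTop (h : ℕ → ℕ) : OrdIdx → ℕ → ℕ
  | some ℓ, x => cichon h ℓ x
  | none, x => cichon h (omegaPow (x+1)) x

end HardyCNF

namespace HardyCNF

/-- Pointwise addition of little-endian CNF coefficient lists.  When every exponent
(with nonzero coefficient) of `a` is at least every exponent of `b`, this is the
CNF coefficient list of the ordinal sum `α + β`. -/
def addCNF : List ℕ → List ℕ → List ℕ
  | [], b => b
  | a, [] => a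
  | x :: xs, y :: ys => (x + y) :: addCNF xs ys

end HardyCNF

namespace HardyCNF
open Ordinal

theorem hardy_nil (h : ℕ → ℕ) (x : ℕ) : hardy h [] x = x := by rw [hardy]

theorem hardy_succ (h : ℕ → ℕ) (c : ℕ) (ℓ : List ℕ) (x : ℕ) :
    hardy h ((c+1) :: ℓ) x = hardy h (c :: ℓ) (h x) := by rw [hardy]

theorem hardy_zero_none (h : ℕ → ℕ) (ℓ : List ℕ) (hs : splitNZ ℓ = none) (x : ℕ) :
    hardy h (0 :: ℓ) x = x := by rw [hardy, hs]

theorem hardy_zero_some (h : ℕ → ℕ) (ℓ : List ℕ) (x k c : ℕ) (r : List ℕ)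
    (hs : splitNZ ℓ = some (k, c, r)) :
    hardy h (0 :: ℓ) x = hardy h (List.replicate k 0 ++ (x+1) :: c :: r) x := by
  rw [hardy, hs]

theorem splitNZ_replicate (m : ℕ) : splitNZ (List.replicate m 0) = none := by
  induction m with
  | zero => rfl
  | succ n ih => simp [List.replicate_succ, splitNZ, ih]

theorem splitNZ_append_zeros (t : List ℕ) (m : ℕ) :
    splitNZ (t ++ List.replicate m 0) =
      (splitNZ t).map (fun x => (x.1, x.2.1, x.2.2 ++ List.replicate m 0)) := by
  induction t with
  | nil => simp [splitNZ, splitNZ_replicate]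
  | cons hd tl ih =>
    match hd with
    | 0 =>
      show splitNZ (0 :: (tl ++ List.replicate m 0)) = _
      rw [splitNZ, splitNZ, ih]
      cases splitNZ tl <;> rfl
    | c+1 => simp [splitNZ]

theorem splitNZ_rep_app (k c : ℕ) (r : List ℕ) :
    splitNZ (List.replicate k 0 ++ (c+1) :: r) = some (k, c, r) := by
  induction k with
  | zero => simp [splitNZ]
  | succ n ih => simp [List.replicate_succ, splitNZ, ih]

theorem splitNZ_none {r : List ℕ} (hs : splitNZ r = none) :
    r = List.replicate r.length 0 := by
  induction r with
  | nil => rfl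
  | cons hd t ih =>
    match hd with
    | 0 =>
      simp only [splitNZ, Option.map_eq_none_iff] at hs
      show 0 :: t = List.replicate (t.length + 1) 0
      rw [List.replicate_succ]
      exact congrArg _ (ih hs)
    | c+1 => simp [splitNZ] at hs

theorem addCNF_nil (a : List ℕ) : addCNF a [] = a := by
  cases a <;> rfl

theorem addCNF_cons (a : List ℕ) (y : ℕ) (t : List ℕ) :
    addCNF a (y :: t) = (a.getD 0 0 + y) :: addCNF (a.drop 1) t := by
  cases a <;> simp [addCNF]

theorem addCNF_zeros (k : ℕ) : ∀ (a : List ℕ), (∀ i < k, a.getD i 0 = 0) →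
    ∀ (y : ℕ) (t : List ℕ),
    addCNF a (List.replicate k 0 ++ y :: t)
      = List.replicate k 0 ++ (a.getD k 0 + y) :: addCNF (a.drop (k+1)) t := by
  induction k with
  | zero => intro a ha y t; simpa using addCNF_cons a y t
  | succ n ih =>
    intro a ha y t
    rw [List.replicate_succ, List.cons_append, addCNF_cons]
    have h0 : a.getD 0 0 = 0 := ha 0 (Nat.succ_pos n)
    have hd : ∀ i < n, (a.drop 1).getD i 0 = 0 := by
      intro i hi
      rw [List.getD_eq_getElem?_getD, List.getElem?_drop, ← List.getD_eq_getElem?_getD]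
      exact ha (1 + i) (by omega)
    have h1 : (a.drop 1).getD n 0 = a.getD (n+1) 0 := by
      rw [List.getD_eq_getElem?_getD, List.getElem?_drop, ← List.getD_eq_getElem?_getD,
        Nat.add_comm]
    have h2 : (a.drop 1).drop (n+1) = a.drop (n+1+1) := by
      rw [List.drop_drop]; congr 1; omega
    rw [ih (a.drop 1) hd y t, h0, h1, h2]
    simp only [Nat.zero_add, List.replicate_succ, List.cons_append]

theorem addCNF_rep_zero (a : List ℕ) : ∀ m : ℕ,
    addCNF a (List.replicate m 0) = a ++ List.replicate (m - a.length) 0 := by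
  induction a with
  | nil => intro m; simp [addCNF]
  | cons a0 as ih =>
    intro m
    match m with
    | 0 => simp [addCNF_nil]
    | m+1 =>
      rw [List.replicate_succ]
      show (a0 + 0) :: addCNF as (List.replicate m 0) = _
      rw [ih m]
      simp

theorem hardy_append_zeros (h : ℕ → ℕ) (a : List ℕ) (m : ℕ) (x : ℕ) :
    hardy h (a ++ List.replicate m 0) x = hardy h a x := by
  match a with
  | [] =>
    match m with
    | 0 => rfl
    | m+1 =>
      rw [List.nil_append, List.replicate_succ,
        hardy_zero_none h _ (splitNZ_replicate m), hardy_nil]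
  | (c+1) :: t =>
    rw [List.cons_append, hardy_succ, hardy_succ, ← List.cons_append]
    exact hardy_append_zeros h (c :: t) m (h x)
  | 0 :: t =>
    rw [List.cons_append]
    match hs : splitNZ t with
    | none =>
      have hs2 : splitNZ (t ++ List.replicate m 0) = none := by
        rw [splitNZ_append_zeros, hs]; rfl
      rw [hardy_zero_none h _ hs2, hardy_zero_none h t hs]
    | some (k, c, r) =>
      have hs2 : splitNZ (t ++ List.replicate m 0)
          = some (k, c, r ++ List.replicate m 0) := by
        rw [splitNZ_append_zeros, hs]; rfl
      rw [hardy_zero_some h _ x k c _ hs2, hardy_zero_some h t x k c r hs]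
      have heq : List.replicate k 0 ++ (x+1) :: c :: (r ++ List.replicate m 0)
          = (List.replicate k 0 ++ (x+1) :: c :: r) ++ List.replicate m 0 := by
        simp
      rw [heq]
      exact hardy_append_zeros h (List.replicate k 0 ++ (x+1) :: c :: r) m x
  termination_by toOrd a
  decreasing_by
  · exact toOrd_succ_lt c t
  · rw [splitNZ_eq hs]; exact toOrd_limit_lt x k c r

end HardyCNF

namespace HardyCNF

theorem getD_rep_app (k : ℕ) (l : List ℕ) : ∀ j : ℕ,
    (List.replicate k 0 ++ l).getD (k + j) 0 = l.getD j 0 := by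
  induction k with
  | zero => intro j; simp
  | succ n ih =>
    intro j
    rw [List.replicate_succ, List.cons_append,
      show n + 1 + j = (n + j) + 1 from by omega, List.getD_cons_succ, ih]

theorem getD_rep_app' (k j : ℕ) (l : List ℕ) (hj : k ≤ j) :
    (List.replicate k 0 ++ l).getD j 0 = l.getD (j - k) 0 := by
  have := getD_rep_app k l (j - k)
  rwa [show k + (j - k) = j from by omega] at this

theorem getD_drop' (a : List ℕ) (n m : ℕ) :
    (a.drop n).getD m 0 = a.getD (n + m) 0 := by
  rw [List.getD_eq_getElem?_getD, List.getElem?_drop, ← List.getD_eq_getElem?_getD]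

end HardyCNF

/-- main -/
theorem hardy_comp_of_cnf' (h : ℕ → ℕ) (a b : List ℕ)
    (hcnf : ∀ i j : ℕ, a.getD i 0 ≠ 0 → b.getD j 0 ≠ 0 → j ≤ i) (x : ℕ) :
    HardyCNF.hardy h a (HardyCNF.hardy h b x) = HardyCNF.hardy h (HardyCNF.addCNF a b) x := by
  match b, hcnf with
  | [], _ => rw [HardyCNF.hardy_nil, HardyCNF.addCNF_nil]
  | (c+1) :: r, hcnf =>
    rw [HardyCNF.hardy_succ]
    have hcnf' : ∀ i j : ℕ, a.getD i 0 ≠ 0 → (c :: r).getD j 0 ≠ 0 → j ≤ i := by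
      intro i j hi hj
      match j with
      | 0 => exact Nat.zero_le i
      | j+1 => exact hcnf i (j+1) hi hj
    rw [hardy_comp_of_cnf' h a (c :: r) hcnf' (h x),
      HardyCNF.addCNF_cons a (c+1) r, HardyCNF.addCNF_cons a c r,
      ← Nat.add_assoc, HardyCNF.hardy_succ]
  | 0 :: r, hcnf =>
    match hs : HardyCNF.splitNZ r with
    | none =>
      rw [HardyCNF.hardy_zero_none h r hs]
      have hr := HardyCNF.splitNZ_none hs
      have hb : (0 : ℕ) :: r = List.replicate (r.length + 1) 0 := by
        rw [List.replicate_succ]; exact congrArg _ hr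
      rw [hb, HardyCNF.addCNF_rep_zero, HardyCNF.hardy_append_zeros]
    | some (k, c, rr) =>
      have hr := HardyCNF.splitNZ_eq hs
      have hbk : ((0:ℕ) :: r).getD (k+1) 0 ≠ 0 := by
        rw [List.getD_cons_succ, hr, HardyCNF.getD_rep_app' k k _ (le_refl k)]
        simp
      have ha_small : ∀ i ≤ k, a.getD i 0 = 0 := by
        intro i hik
        by_contra hne
        have := hcnf i (k+1) hne hbk
        omega
      have hcnf' : ∀ i j : ℕ, a.getD i 0 ≠ 0 →
          (List.replicate k 0 ++ (x+1) :: c :: rr).getD j 0 ≠ 0 → j ≤ i := by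
        intro i j hi hj
        have hik : k + 1 ≤ i := hcnf i (k+1) hi hbk
        by_cases hjk : j ≤ k + 1
        · omega
        · obtain ⟨m, rfl⟩ : ∃ m, j = k+2+m := ⟨j - (k+2), by omega⟩
          rw [HardyCNF.getD_rep_app' k _ _ (by omega),
            show k+2+m-k = (m+1)+1 from by omega,
            List.getD_cons_succ, List.getD_cons_succ] at hj
          apply hcnf i (k+2+m) hi
          rw [show k+2+m = (k+1+m)+1 from by omega, List.getD_cons_succ, hr,
            HardyCNF.getD_rep_app' k _ _ (by omega),
            show k+1+m-k = m+1 from by omega, List.getD_cons_succ]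
          exact hj
      rw [HardyCNF.hardy_zero_some h r x k c rr hs,
        hardy_comp_of_cnf' h a (List.replicate k 0 ++ (x+1) :: c :: rr) hcnf' x]
      -- compute LHS addCNF
      rw [HardyCNF.addCNF_zeros k a (fun i hi => ha_small i (by omega)) (x+1) (c :: rr),
        ha_small k (le_refl k), Nat.zero_add,
        HardyCNF.addCNF_cons (a.drop (k+1)) c rr,
        HardyCNF.getD_drop' a (k+1) 0, Nat.add_zero,
        show (a.drop (k+1)).drop 1 = a.drop (k+1+1) from by
          rw [List.drop_drop]]
      -- compute RHS addCNF
      have hb : (0 : ℕ) :: r = List.replicate (k+1) 0 ++ (c+1) :: rr := by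
        rw [List.replicate_succ, List.cons_append]; exact congrArg _ hr
      rw [hb, HardyCNF.addCNF_zeros (k+1) a (fun i hi => ha_small i (by omega)) (c+1) rr,
        ← Nat.add_assoc, List.replicate_succ, List.cons_append,
        HardyCNF.hardy_zero_some h _ x k (a.getD (k+1) 0 + c) _
          (HardyCNF.splitNZ_rep_app k (a.getD (k+1) 0 + c) _)]
  termination_by HardyCNF.toOrd b
  decreasing_by
  · exact HardyCNF.toOrd_succ_lt c r
  · rw [HardyCNF.splitNZ_eq hs]; exact HardyCNF.toOrd_limit_lt x k c rr

/-- If `α + β` is in Cantor normal form — i.e. every exponent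
occurring (with a nonzero coefficient) in the CNF of `α` is at least every exponent
occurring in the CNF of `β` — then `h^α(h^β(x)) = h^{α+β}(x)` for all `x`,
for the Hardy hierarchy relative to any `h : ℕ → ℕ`. -/
theorem hardy_comp_of_cnf (h : ℕ → ℕ) (a b : List ℕ)
    (hcnf : ∀ i j : ℕ, a.getD i 0 ≠ 0 → b.getD j 0 ≠ 0 → j ≤ i) (x : ℕ) :
    HardyCNF.hardy h a (HardyCNF.hardy h b x) = HardyCNF.hardy h (HardyCNF.addCNF a b) x := by
  exact hardy_comp_of_cnf' h a b hcnf x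
end
end

section
/- Let h : ℕ → ℕ be any function. Then for every ordinal α ≤ ω^ω and every x ∈ ℕ, h^{h_α(x)}(x) = h^α(x); that is, the h_α(x)-th finite iterate of h applied to x equals the Hardy function h^α applied to x. -/
noncomputable section

theorem key (h : ℕ → ℕ) : ∀ ℓ x, h^[HardyCNF.cichon h ℓ x] x = HardyCNF.hardy h ℓ x
  | [], x => by simp [HardyCNF.cichon, HardyCNF.hardy]
  | (c+1) :: ℓ, x => by
    rw [show HardyCNF.cichon h ((c+1)::ℓ) x = 1 + HardyCNF.cichon h (c::ℓ) (h x) from by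
      rw [HardyCNF.cichon],
      show HardyCNF.hardy h ((c+1)::ℓ) x = HardyCNF.hardy h (c::ℓ) (h x) from by
      rw [HardyCNF.hardy]]
    rw [Nat.add_comm, Function.iterate_succ_apply]
    exact key h (c::ℓ) (h x)
  | 0 :: ℓ, x => by
    rw [HardyCNF.cichon, HardyCNF.hardy]
    split
    · simp
    · exact key h _ x
  termination_by ℓ _ => HardyCNF.toOrd ℓ
  decreasing_by
  · exact HardyCNF.toOrd_succ_lt c ℓ
  · rename_i heq; rw [HardyCNF.splitNZ_eq heq]; exact HardyCNF.toOrd_limit_lt x _ _ _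

/-- For any `h : ℕ → ℕ`, any ordinal `α ≤ ω^ω` and any `x`,
the `h_α(x)`-th finite iterate of `h` applied to `x` equals `h^α(x)`:
`h^{h_α(x)}(x) = h^α(x)`. -/
theorem hardy_eq_iterate_cichon (h : ℕ → ℕ) (α : HardyCNF.OrdIdx) (x : ℕ) :
    h^[HardyCNF.cichonTop h α x] x = HardyCNF.hardyTop h α x := by
  cases α with
  | none => exact key h _ x
  | some ℓ => exact key h ℓ x
end
end

section
/- Let H : ℕ → ℕ be the successor function H(x) = x + 1. Then for every ordinal α ≤ ω^ω and every x ∈ ℕ, H^α(x) = H_α(x) + x, where (H^α) and (H_α) are respectively the Hardy and Cichoń hierarchies relative to H. -/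
noncomputable section

namespace HardyCNF

open Ordinal

theorem hardy_succ_eq (ℓ : List ℕ) (x : ℕ) :
    hardy (fun t => t + 1) ℓ x = cichon (fun t => t + 1) ℓ x + x := by
  match ℓ with
  | [] => simp [hardy, cichon]
  | (c+1) :: ℓ =>
    rw [hardy, cichon, hardy_succ_eq (c::ℓ) (x+1)]
    omega
  | 0 :: ℓ =>
    rw [hardy, cichon]
    match hs : splitNZ ℓ with
    | none => simp
    | some (k, c, r) =>
      simp only
      exact hardy_succ_eq _ x
  termination_by toOrd ℓ
  decreasing_by
  · exact toOrd_succ_lt c ℓ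
  · rw [splitNZ_eq hs]; exact toOrd_limit_lt x k c r

end HardyCNF

/-- For the successor function `H(x) = x + 1` and every `α ≤ ω^ω`,
`H^α(x) = H_α(x) + x`, relating the Hardy and Cichoń hierarchies relative to `H`. -/
theorem hardy_eq_cichon_add_self_succ (α : HardyCNF.OrdIdx) (x : ℕ) :
    HardyCNF.hardyTop (fun t => t + 1) α x = HardyCNF.cichonTop (fun t => t + 1) α x + x := by
  cases α with
  | none => exact HardyCNF.hardy_succ_eq _ x
  | some ℓ => exact HardyCNF.hardy_succ_eq ℓ x
end
end
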